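/- Let S be a subset of ω₁. Then: (1) if S is compact then cof(K(S)) = 1; (2) if S is bounded in ω₁, not compact, and cl(S) \ S is closed in ω₁, then cof(K(S)) = ω; (3) if S is unbounded in ω₁ and cl(S) \ S is closed in ω₁, then cof(K(S)) = ω₁; (4) if cl(S) \ S is not closed in ω₁, then cof(K(S)) = 𝔡. -/

import Mathlib

open Cardinal Set

universe u v

/-- `C` is cofinal for `P'` in `P`: every element of `P'` lies below some element of `C`. -/
def IsCofinalFor' {P : Type u} [Preorder P] (P' C : Set P) : Prop :=
  ∀ p ∈ P', ∃ c ∈ C, p ≤ c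

/-- `φ : P → Q` is a relative Tukey quotient from `(P', P)` to `(Q', Q)`:
it maps every subset of `P` cofinal for `P'` to a subset of `Q` cofinal for `Q'`. -/
def IsRelTukeyQuotient {P : Type u} {Q : Type v} [Preorder P] [Preorder Q]
    (P' : Set P) (Q' : Set Q) (φ : P → Q) : Prop :=
  ∀ C : Set P, IsCofinalFor' P' C → IsCofinalFor' Q' (φ '' C)

/-- `(P', P) ≥_T (Q', Q)`: there exists a relative Tukey quotient. -/
def RelTukeyGE {P : Type u} {Q : Type v} [Preorder P] [Preorder Q]
    (P' : Set P) (Q' : Set Q) : Prop :=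
  ∃ φ : P → Q, IsRelTukeyQuotient P' Q' φ

/-- `P ≥_T Q`: there is a Tukey quotient from `P` to `Q`. -/
def TukeyGE (P : Type u) (Q : Type v) [Preorder P] [Preorder Q] : Prop :=
  RelTukeyGE (Set.univ : Set P) (Set.univ : Set Q)

/-- `A` is unbounded in `P`: it has no upper bound in `P`. -/
def UnboundedIn {P : Type u} [Preorder P] (A : Set P) : Prop :=
  ¬ ∃ b : P, ∀ a ∈ A, a ≤ b

noncomputable section

/-- `ω₁`: the set of countable ordinals, as the canonical well-order of order type `ω₁`. -/
def O1 : Type := (Cardinal.aleph 1).ord.ToType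

noncomputable instance : LinearOrder O1 :=
  inferInstanceAs (LinearOrder (Cardinal.aleph 1).ord.ToType)

/-- `ω₁` carries its order topology. -/
instance : TopologicalSpace O1 := Preorder.topology O1

instance : OrderTopology O1 := ⟨rfl⟩

/-- `K(S)` for `S ⊆ ω₁`: the compact subsets of `S` (equivalently, compact subsets of `ω₁`
contained in `S`), ordered by inclusion. -/
def KS (S : Set O1) : Type := {K : Set O1 // K ⊆ S ∧ IsCompact K}

instance (S : Set O1) : PartialOrder (KS S) := Subtype.partialOrder _

/-- `A ⊆ ω₁` is bounded in `ω₁`. -/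
def BddO1 (A : Set O1) : Prop := ∃ β : O1, ∀ x ∈ A, x ≤ β

/-- `cof(P)`: the least cardinality of a cofinal subset of `P`. -/
noncomputable def cofOf (P : Type u) [Preorder P] : Cardinal.{u} :=
  sInf {c : Cardinal.{u} | ∃ C : Set P, IsCofinalFor' Set.univ C ∧ #↥C = c}

/-- `𝔡`: the least cardinality of a dominating (cofinal) family in `ω^ω` with the
pointwise order. -/
noncomputable def frakD : Cardinal :=
  sInf {c : Cardinal | ∃ D : Set (ℕ → ℕ), (∀ f : ℕ → ℕ, ∃ g ∈ D, f ≤ g) ∧ #↥D = c}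
-- Infrastructure lemmas about O1



instance : WellFoundedLT O1 := inferInstanceAs (WellFoundedLT (Cardinal.aleph 1).ord.ToType)

lemma mk_O1 : #O1 = Cardinal.aleph 1 := by
  show #(Cardinal.aleph 1).ord.ToType = _
  rw [Cardinal.mk_toType, Cardinal.card_ord]

instance : Nonempty O1 := by
  rw [← Cardinal.mk_ne_zero_iff, mk_O1]
  exact (Cardinal.aleph_pos 1).ne'

noncomputable instance : OrderBot O1 where
  bot := (IsWellFounded.wf (r := ((· < ·) : O1 → O1 → Prop))).min Set.univ Set.univ_nonempty
  bot_le a := not_lt.1 <|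
    (IsWellFounded.wf (r := ((· < ·) : O1 → O1 → Prop))).not_lt_min Set.univ
      (Set.mem_univ a)

noncomputable instance : ConditionallyCompleteLinearOrderBot O1 :=
  WellFoundedLT.conditionallyCompleteLinearOrderBot O1

lemma countable_Iio (x : O1) : (Set.Iio x).Countable := by
  rw [Cardinal.countable_iff_lt_aleph_one]
  exact Cardinal.mk_Iio_ord_toType (c := Cardinal.aleph 1) x

lemma countable_Iic (x : O1) : (Set.Iic x).Countable := by
  have : Set.Iic x ⊆ insert x (Set.Iio x) := by
    intro y hy
    rcases eq_or_lt_of_le (Set.mem_Iic.1 hy) with h | h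
    · exact Set.mem_insert_iff.2 (Or.inl h)
    · exact Set.mem_insert_iff.2 (Or.inr h)
  exact ((countable_Iio x).insert x).mono this

/-- Every countable subset of `ω₁` is bounded. -/
lemma countable_bdd {A : Set O1} (hA : A.Countable) : BddO1 A := by
  rcases A.eq_empty_or_nonempty with rfl | hne
  · exact ⟨⊥, by simp⟩
  by_contra h
  -- if A unbounded then O1 = ⋃ a ∈ A, Iic a is countable, contradiction
  have hcover : (Set.univ : Set O1) ⊆ ⋃ a ∈ A, Set.Iic a := by
    intro x _
    simp only [BddO1, not_exists] at h
    have := h x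
    push_neg at this
    rcases this with ⟨a, ha, hlt⟩
    exact Set.mem_biUnion ha hlt.le
  have hc : (Set.univ : Set O1).Countable :=
    Set.Countable.mono hcover (hA.biUnion fun a _ => countable_Iic a)
  have := Set.countable_univ_iff.1 hc
  have h1 : #O1 ≤ Cardinal.aleph0 := Cardinal.mk_le_aleph0
  rw [mk_O1] at h1
  exact absurd h1 (not_le.2 (Cardinal.aleph0_lt_aleph_one))

lemma exists_gt (x : O1) : ∃ y, x < y := by
  by_contra h
  push_neg at h
  have : (Set.univ : Set O1) ⊆ Set.Iic x := fun y _ => h y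
  have hc := Set.countable_univ_iff.1 ((countable_Iic x).mono this)
  have h1 : #O1 ≤ Cardinal.aleph0 := Cardinal.mk_le_aleph0
  rw [mk_O1] at h1
  exact absurd h1 (not_le.2 (Cardinal.aleph0_lt_aleph_one))

instance : NoMaxOrder O1 := ⟨exists_gt⟩

noncomputable instance : SuccOrder O1 := ConditionallyCompleteLinearOrder.toSuccOrder

lemma isOpen_Ioc (l a : O1) : IsOpen (Set.Ioc l a) := by
  rw [← Order.Ioo_succ_right]
  exact isOpen_Ioo

lemma bddO1_iff {A : Set O1} : BddO1 A ↔ BddAbove A := by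
  constructor
  · rintro ⟨b, hb⟩; exact ⟨b, fun x hx => hb x hx⟩
  · rintro ⟨b, hb⟩; exact ⟨b, fun x hx => hb hx⟩

/-- compact sets are closed and bounded -/
lemma IsCompact.bddO1' {K : Set O1} (hK : IsCompact K) : BddO1 K :=
  bddO1_iff.2 hK.bddAbove

lemma isCompact_of_closed_bdd {K : Set O1} (hcl : IsClosed K) (hbd : BddO1 K) :
    IsCompact K := by
  rcases hbd with ⟨b, hb⟩
  have : K ⊆ Set.Icc ⊥ b := fun x hx => ⟨bot_le, hb x hx⟩
  exact (isCompact_Icc).of_isClosed_subset hcl this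

/-- points of `closure A \ A` are approached strictly from below by `A` -/
lemma approach_from_below {A : Set O1} {a : O1} (h1 : a ∈ closure A) (h2 : a ∉ A)
    {l : O1} (hl : l < a) : ∃ z ∈ A, l < z ∧ z < a := by
  have hopen : IsOpen (Set.Ioc l a) := isOpen_Ioc l a
  have hmem : a ∈ Set.Ioc l a := ⟨hl, le_rfl⟩
  rcases (mem_closure_iff.1 h1) _ hopen hmem with ⟨z, hz1, hz2⟩
  exact ⟨z, hz2, hz1.1, lt_of_le_of_ne hz1.2 (fun h => h2 (h ▸ hz2))⟩

lemma bot_lt_of_mem_diff {A : Set O1} {a : O1} (h1 : a ∈ closure A) (h2 : a ∉ A) :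
    ⊥ < a := by
  rcases eq_or_lt_of_le (bot_le : ⊥ ≤ a) with h | h
  · exfalso
    subst h
    have hopen : IsOpen (Set.Iic (⊥ : O1)) := by
      have : Set.Iic (⊥ : O1) = Set.Iio (Order.succ ⊥) := by
        rw [Order.Iio_succ]  -- may not be the right name
      rw [this]; exact isOpen_Iio
    rcases (mem_closure_iff.1 h1) _ hopen (Set.mem_Iic.2 le_rfl) with ⟨z, hz1, hz2⟩
    exact h2 ((le_bot_iff.1 (Set.mem_Iic.1 hz1)) ▸ hz2)
  · exact h


/-- A strictly monotone cofinal sequence in `T ∩ Iio a` when `a` is approached from below by `T`. -/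
lemma exists_cofinal_seq {T : Set O1} {a : O1} (hbot : ⊥ < a)
    (h : ∀ l, l < a → ∃ z, z ∈ T ∧ l < z ∧ z < a) :
    ∃ y : ℕ → O1, StrictMono y ∧ (∀ m, y m ∈ T ∧ y m < a) ∧ ∀ l, l < a → ∃ m, l < y m := by
  choose! g hg1 hg2 hg3 using h
  have hIio : (Set.Iio a).Countable := countable_Iio a
  obtain ⟨e, he⟩ := hIio.exists_eq_range ⟨⊥, hbot⟩
  have he' : ∀ n, e n < a := fun n => by
    have : e n ∈ Set.Iio a := he ▸ Set.mem_range_self n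
    exact this
  let y : ℕ → O1 := fun n => Nat.rec (g (e 0)) (fun n yn => g (max yn (e (n + 1)))) n
  have hy0 : y 0 = g (e 0) := rfl
  have hys : ∀ n, y (n + 1) = g (max (y n) (e (n + 1))) := fun n => rfl
  have hlt : ∀ n, y n < a := by
    intro n
    induction n with
    | zero => exact hg3 _ (he' 0)
    | succ n ih => exact hg3 _ (max_lt ih (he' (n + 1)))
  have hmem : ∀ n, y n ∈ T := by
    intro n
    cases n with
    | zero => exact hg1 _ (he' 0)
    | succ n => exact hg1 _ (max_lt (hlt n) (he' (n + 1)))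
  have hmono : StrictMono y := by
    apply strictMono_nat_of_lt_succ
    intro n
    calc y n ≤ max (y n) (e (n + 1)) := le_max_left _ _
    _ < y (n + 1) := hg2 _ (max_lt (hlt n) (he' (n + 1)))
  refine ⟨y, hmono, fun m => ⟨hmem m, hlt m⟩, ?_⟩
  intro l hl
  obtain ⟨n, hn⟩ := (he ▸ (Set.mem_Iio.2 hl) : l ∈ Set.range e)
  cases n with
  | zero => exact ⟨0, hn ▸ hg2 _ (he' 0)⟩
  | succ n =>
      refine ⟨n + 1, lt_of_le_of_lt ?_ (hg2 _ (max_lt (hlt n) (he' (n + 1))))⟩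
      rw [← hn]; exact le_max_right _ _
lemma cofOf_le {P : Type} [Preorder P] {C : Set P} (h : IsCofinalFor' Set.univ C) :
    cofOf P ≤ #C :=
  csInf_le' ⟨C, h, rfl⟩

lemma cofOf_spec (P : Type) [Preorder P] :
    ∃ C : Set P, IsCofinalFor' Set.univ C ∧ #C = cofOf P := by
  have h : cofOf P ∈ {c : Cardinal | ∃ C : Set P, IsCofinalFor' Set.univ C ∧ #↥C = c} :=
    csInf_mem ⟨_, Set.univ, fun p _ => ⟨p, Set.mem_univ p, le_rfl⟩, rfl⟩
  exact h

lemma frakD_le {D : Set (ℕ → ℕ)} (h : ∀ f : ℕ → ℕ, ∃ g ∈ D, f ≤ g) : frakD ≤ #D :=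
  csInf_le' ⟨D, h, rfl⟩

lemma frakD_spec : ∃ D : Set (ℕ → ℕ), (∀ f : ℕ → ℕ, ∃ g ∈ D, f ≤ g) ∧ #D = frakD := by
  have h : frakD ∈ {c : Cardinal | ∃ D : Set (ℕ → ℕ), (∀ f : ℕ → ℕ, ∃ g ∈ D, f ≤ g) ∧ #↥D = c} :=
    csInf_mem ⟨_, Set.univ, fun f => ⟨f, Set.mem_univ f, le_rfl⟩, rfl⟩
  exact h

lemma aleph0_lt_frakD : ℵ₀ < frakD := by
  rcases frakD_spec with ⟨D, hdom, hD⟩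
  rw [← hD, lt_iff_not_ge, Cardinal.mk_le_aleph0_iff]
  intro hc
  have hne : D.Nonempty := by
    rcases hdom 0 with ⟨g, hg, _⟩; exact ⟨g, hg⟩
  obtain ⟨e, he⟩ := (Set.countable_coe_iff.1 hc).exists_eq_range hne
  rcases hdom (fun n => e n n + 1) with ⟨g, hg, hle⟩
  rw [he] at hg
  obtain ⟨i, rfl⟩ := hg
  exact absurd (hle i) (by simp)

lemma aleph_one_le_frakD : Cardinal.aleph 1 ≤ frakD := by
  rw [← Cardinal.succ_aleph0]
  exact Order.succ_le_of_lt aleph0_lt_frakD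

/-- bounded sets are countable -/
lemma bdd_countable {A : Set O1} (h : BddO1 A) : A.Countable := by
  rcases h with ⟨b, hb⟩
  exact (countable_Iic b).mono fun x hx => hb x hx

lemma closure_bdd {A : Set O1} (h : BddO1 A) : BddO1 (closure A) := by
  rcases h with ⟨b, hb⟩
  exact ⟨b, fun x hx => (isClosed_Iic.closure_subset_iff.2 fun y hy => hb y hy) hx⟩

lemma exists_Ioc_disjoint {K : Set O1} (hK : IsClosed K) {a : O1} (ha : a ∉ K)
    (hbot : ⊥ < a) : ∃ l, l < a ∧ Set.Ioc l a ∩ K = ∅ := by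
  have hmem : Kᶜ ∈ nhds a := hK.isOpen_compl.mem_nhds ha
  obtain ⟨l, hl, hsub⟩ := exists_Ioc_subset_of_mem_nhds hmem ⟨⊥, hbot⟩
  exact ⟨l, hl, by rw [Set.eq_empty_iff_forall_notMem]; exact fun x ⟨h1, h2⟩ => hsub h1 h2⟩

/-- the closure-difference set of a truncation -/
lemma diff_trunc_eq {S : Set O1} (β : O1) :
    closure (S ∩ Set.Iic β) \ (S ∩ Set.Iic β) = closure (S ∩ Set.Iic β) ∩ (closure S \ S) := by
  ext x
  constructor
  · rintro ⟨h1, h2⟩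
    have hxβ : x ∈ Set.Iic β :=
      (isClosed_Iic.closure_subset_iff.2 Set.inter_subset_right) h1
    have hxS : x ∈ closure S := closure_mono Set.inter_subset_left h1
    refine ⟨h1, hxS, fun hxs => h2 ⟨hxs, hxβ⟩⟩
  · rintro ⟨h1, h2, h3⟩
    exact ⟨h1, fun h => h3 h.1⟩

lemma trunc_diff_closed {S : Set O1} (hF : IsClosed (closure S \ S)) (β : O1) :
    IsClosed (closure (S ∩ Set.Iic β) \ (S ∩ Set.Iic β)) := by
  rw [diff_trunc_eq]
  exact isClosed_closure.inter hF
/-- For bounded `T` with `closure T \ T` closed, there is a countable cofinal family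
of compact subsets of `T`. -/
lemma countable_cofinal_of_closed_diff {T : Set O1} (hbd : BddO1 T)
    (hFcl : IsClosed (closure T \ T)) :
    ∃ 𝒞 : Set (Set O1), 𝒞.Countable ∧ (∀ L ∈ 𝒞, L ⊆ T ∧ IsCompact L) ∧
      ∀ K, K ⊆ T → IsCompact K → ∃ L ∈ 𝒞, K ⊆ L := by
  set Z := closure T with hZ
  set F := closure T \ T with hFdef
  have hZbd : BddO1 Z := closure_bdd hbd
  have hZcl : IsClosed Z := isClosed_closure
  have hZcpt : IsCompact Z := isCompact_of_closed_bdd hZcl hZbd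
  have hFbd : BddO1 F := by rcases hZbd with ⟨b, hb⟩; exact ⟨b, fun x hx => hb x hx.1⟩
  have hFcount : F.Countable := bdd_countable hFbd
  have hFcpt : IsCompact F := isCompact_of_closed_bdd hFcl hFbd
  -- cofinal sequences below each point of F
  have hseq : ∀ a ∈ F, ∃ y : ℕ → O1, StrictMono y ∧ (∀ m, y m ∈ T ∧ y m < a) ∧
      ∀ l, l < a → ∃ m, l < y m := by
    intro a ha
    exact exists_cofinal_seq (bot_lt_of_mem_diff ha.1 ha.2)
      (fun l hl => by
        rcases approach_from_below ha.1 ha.2 hl with ⟨z, h1, h2, h3⟩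
        exact ⟨z, h1, h2, h3⟩)
  choose! y hy1 hy2 hy3 using hseq
  -- the family
  let C : Set (O1 × ℕ) → Set O1 := fun G => Z \ ⋃ p ∈ G, Set.Ioc (y p.1 p.2) p.1
  let 𝒜 : Set (Set (O1 × ℕ)) :=
    {G | G.Finite ∧ G ⊆ F ×ˢ (Set.univ : Set ℕ) ∧ F ⊆ ⋃ p ∈ G, Set.Ioc (y p.1 p.2) p.1}
  refine ⟨C '' 𝒜, ?_, ?_, ?_⟩
  · apply Set.Countable.image
    refine (Set.countable_setOf_finite_subset (hFcount.prod Set.countable_univ)).mono ?_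
    rintro G ⟨h1, h2, h3⟩
    exact ⟨h1, h2⟩
  · rintro L ⟨G, hG, rfl⟩
    constructor
    · intro x hx
      rcases hx with ⟨hxZ, hxU⟩
      by_contra hxT
      exact hxU (hG.2.2 ⟨hxZ, hxT⟩)
    · refine isCompact_of_closed_bdd ?_ ?_
      · exact hZcl.sdiff (isOpen_biUnion fun p _ => isOpen_Ioc _ _)
      · rcases hZbd with ⟨b, hb⟩; exact ⟨b, fun x hx => hb x hx.1⟩
  · intro K hKT hKcpt
    have hKcl : IsClosed K := hKcpt.isClosed
    -- for each a ∈ F choose an index m with the interval missing K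
    have hchoose : ∀ a ∈ F, ∃ m : ℕ, Set.Ioc (y a m) a ∩ K = ∅ := by
      intro a ha
      have haK : a ∉ K := fun h => ha.2 (hKT h)
      obtain ⟨l, hl, hdisj⟩ := exists_Ioc_disjoint hKcl haK (bot_lt_of_mem_diff ha.1 ha.2)
      obtain ⟨m, hm⟩ := hy3 a ha l hl
      refine ⟨m, Set.eq_empty_iff_forall_notMem.2 fun x ⟨hx1, hx2⟩ => ?_⟩
      rw [Set.eq_empty_iff_forall_notMem] at hdisj
      exact hdisj x ⟨⟨hm.trans hx1.1, hx1.2⟩, hx2⟩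
    choose! m hm using hchoose
    -- F is covered by these intervals; extract a finite subcover
    have hcover : F ⊆ ⋃ i : ↥F, Set.Ioc (y i.1 (m i.1)) i.1 := by
      intro a ha
      exact Set.mem_iUnion.2 ⟨⟨a, ha⟩, (hy2 a ha (m a)).2, le_rfl⟩
    obtain ⟨t, ht⟩ := hFcpt.elim_finite_subcover (fun i : ↥F => Set.Ioc (y i.1 (m i.1)) i.1)
      (fun i => isOpen_Ioc _ _) hcover
    set G : Set (O1 × ℕ) := (fun i : ↥F => (i.1, m i.1)) '' ↑t with hGdef
    have hGA : G ∈ 𝒜 := by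
      refine ⟨(t.finite_toSet).image _, ?_, ?_⟩
      · rintro p ⟨i, _, rfl⟩; exact ⟨i.2, Set.mem_univ _⟩
      · intro a ha
        rcases Set.mem_iUnion₂.1 (ht ha) with ⟨i, hi, hmem⟩
        exact Set.mem_biUnion (Set.mem_image_of_mem _ hi) hmem
    refine ⟨C G, Set.mem_image_of_mem _ hGA, ?_⟩
    intro x hx
    refine ⟨subset_closure (hKT hx), ?_⟩
    intro hmem
    rcases Set.mem_iUnion₂.1 hmem with ⟨p, hp, hxp⟩
    rcases hp with ⟨i, _, rfl⟩
    have := hm i.1 i.2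
    rw [Set.eq_empty_iff_forall_notMem] at this
    exact this x ⟨hxp, hx⟩
/-- For any bounded `T ⊆ ω₁`, there is a monotone `(ℕ → ℕ)`-indexed cofinal family
of compact subsets of `T`. -/
lemma dfamily_cofinal_bounded {T : Set O1} (hbd : BddO1 T) :
    ∃ Φ : (ℕ → ℕ) → Set O1, Monotone Φ ∧ (∀ f, Φ f ⊆ T ∧ IsCompact (Φ f)) ∧
      ∀ K, K ⊆ T → IsCompact K → ∃ f, K ⊆ Φ f := by
  set Z := closure T with hZ
  set F := closure T \ T with hFdef
  have hZbd : BddO1 Z := closure_bdd hbd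
  have hZcl : IsClosed Z := isClosed_closure
  have hFbd : BddO1 F := by rcases hZbd with ⟨b, hb⟩; exact ⟨b, fun x hx => hb x hx.1⟩
  have hFcount : F.Countable := bdd_countable hFbd
  have hZsub : ∀ x ∈ Z, x ∉ F → x ∈ T := fun x hx hf => by
    by_contra h; exact hf ⟨hx, h⟩
  rcases F.eq_empty_or_nonempty with hFe | hFne
  · -- F empty : Z itself is the largest compact subset
    refine ⟨fun _ => Z, monotone_const, fun f => ⟨?_, isCompact_of_closed_bdd hZcl hZbd⟩,
      fun K hK _ => ⟨0, fun x hx => subset_closure (hK hx)⟩⟩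
    intro x hx
    exact hZsub x hx (by rw [hFe]; exact Set.notMem_empty x)
  · obtain ⟨a, ha⟩ := hFcount.exists_eq_range hFne
    have haF : ∀ n, a n ∈ F := fun n => by rw [ha]; exact Set.mem_range_self n
    have hseq : ∀ n : ℕ, ∃ y : ℕ → O1, StrictMono y ∧ (∀ m, y m ∈ T ∧ y m < a n) ∧
        ∀ l, l < a n → ∃ m, l < y m := by
      intro n
      exact exists_cofinal_seq (bot_lt_of_mem_diff (haF n).1 (haF n).2)
        (fun l hl => by
          rcases approach_from_below (haF n).1 (haF n).2 hl with ⟨z, h1, h2, h3⟩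
          exact ⟨z, h1, h2, h3⟩)
    choose y hy1 hy2 hy3 using hseq
    refine ⟨fun f => Z \ ⋃ n, Set.Ioc (y n (f n)) (a n), ?_, ?_, ?_⟩
    · -- monotone
      intro f g hfg x hx
      refine ⟨hx.1, fun hmem => hx.2 ?_⟩
      rcases Set.mem_iUnion.1 hmem with ⟨n, hn⟩
      exact Set.mem_iUnion.2 ⟨n, ⟨lt_of_le_of_lt ((hy1 n).monotone (hfg n)) hn.1, hn.2⟩⟩
    · intro f
      constructor
      · intro x hx
        refine hZsub x hx.1 fun hxF => hx.2 ?_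
        rw [ha] at hxF
        rcases hxF with ⟨n, rfl⟩
        exact Set.mem_iUnion.2 ⟨n, (hy2 n (f n)).2, le_rfl⟩
      · refine isCompact_of_closed_bdd (hZcl.sdiff (isOpen_iUnion fun n => isOpen_Ioc _ _)) ?_
        rcases hZbd with ⟨b, hb⟩; exact ⟨b, fun x hx => hb x hx.1⟩
    · intro K hKT hKcpt
      have hKcl : IsClosed K := hKcpt.isClosed
      have hchoose : ∀ n : ℕ, ∃ m : ℕ, Set.Ioc (y n m) (a n) ∩ K = ∅ := by
        intro n
        have haK : a n ∉ K := fun h => (haF n).2 (hKT h)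
        obtain ⟨l, hl, hdisj⟩ := exists_Ioc_disjoint hKcl haK
          (bot_lt_of_mem_diff (haF n).1 (haF n).2)
        obtain ⟨m, hm⟩ := hy3 n l hl
        refine ⟨m, Set.eq_empty_iff_forall_notMem.2 fun x ⟨hx1, hx2⟩ => ?_⟩
        rw [Set.eq_empty_iff_forall_notMem] at hdisj
        exact hdisj x ⟨⟨hm.trans hx1.1, hx1.2⟩, hx2⟩
      choose f hf using hchoose
      refine ⟨f, fun x hx => ⟨subset_closure (hKT hx), ?_⟩⟩
      intro hmem
      rcases Set.mem_iUnion.1 hmem with ⟨n, hn⟩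
      have := hf n
      rw [Set.eq_empty_iff_forall_notMem] at this
      exact this x ⟨hn, hx⟩
/-- If `closure S \ S` is not closed, every cofinal family in `K(S)` has size at least `𝔡`. -/
lemma frakD_le_cofinal {S : Set O1} (hF : ¬ IsClosed (closure S \ S))
    {C : Set (KS S)} (hC : IsCofinalFor' Set.univ C) : frakD ≤ #C := by
  set F := closure S \ S with hFdef
  -- a point of `closure F \ F`
  have hex : ∃ x, x ∈ closure F ∧ x ∉ F := by
    by_contra h
    push_neg at h
    exact hF (by
      have : closure F ⊆ F := fun z hz => h z hz
      rw [Set.Subset.antisymm subset_closure this]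
      exact isClosed_closure)
  obtain ⟨x, hx1, hx2⟩ := hex
  have hxS : x ∈ S := by
    have hxcl : x ∈ closure S := by
      have : closure F ⊆ closure S := by
        rw [← closure_closure (s := S)]
        exact closure_mono Set.diff_subset
      exact this hx1
    by_contra h
    exact hx2 ⟨hxcl, h⟩
  have hxbot : ⊥ < x := bot_lt_of_mem_diff hx1 hx2
  -- strictly increasing cofinal sequence in `F` below `x`
  obtain ⟨xs, hxs1, hxs2, hxs3⟩ := exists_cofinal_seq hxbot
    (fun l hl => by
      rcases approach_from_below hx1 hx2 hl with ⟨z, h1, h2, h3⟩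
      exact ⟨z, h1, h2, h3⟩)
  have hxsF : ∀ n, xs n ∈ F := fun n => (hxs2 n).1
  have hxslt : ∀ n, xs n < x := fun n => (hxs2 n).2
  have hxsbot : ∀ n, ⊥ < xs n := fun n => bot_lt_of_mem_diff (hxsF n).1 (hxsF n).2
  -- per-level sequences in `S`
  let Tn : ℕ → Set O1 := fun n => Nat.casesOn n S (fun k => S ∩ Set.Ioi (xs k))
  have happ : ∀ n, ∀ l, l < xs n → ∃ z, z ∈ Tn n ∧ l < z ∧ z < xs n := by
    intro n
    cases n with
    | zero =>
        intro l hl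
        rcases approach_from_below (hxsF 0).1 (hxsF 0).2 hl with ⟨z, h1, h2, h3⟩
        exact ⟨z, h1, h2, h3⟩
    | succ k =>
        intro l hl
        have hkk : xs k < xs (k + 1) := hxs1 (Nat.lt_succ_self k)
        have hmax : max l (xs k) < xs (k + 1) := max_lt hl hkk
        rcases approach_from_below (hxsF (k + 1)).1 (hxsF (k + 1)).2 hmax with ⟨z, h1, h2, h3⟩
        exact ⟨z, ⟨h1, lt_of_le_of_lt (le_max_right _ _) h2⟩, lt_of_le_of_lt (le_max_left _ _) h2, h3⟩
  have hseq : ∀ n, ∃ y : ℕ → O1, StrictMono y ∧ (∀ m, y m ∈ Tn n ∧ y m < xs n) ∧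
      ∀ l, l < xs n → ∃ m, l < y m :=
    fun n => exists_cofinal_seq (hxsbot n) (happ n)
  choose y hy1 hy2 hy3 using hseq
  have hyS : ∀ n m, y n m ∈ S := by
    intro n m
    have := (hy2 n m).1
    cases n with
    | zero => exact this
    | succ k => exact this.1
  have hygt : ∀ k m, xs k < y (k + 1) m := fun k m => ((hy2 (k + 1) m).1 : _ ∧ _).2
  have hylt : ∀ n m, y n m < xs n := fun n m => (hy2 n m).2
  have hyltx : ∀ n m, y n m < x := fun n m => (hylt n m).trans (hxslt n)
  -- the compact test sets
  let D : (ℕ → ℕ) → Set O1 := fun f => {x} ∪ ⋃ n, (y n) '' Set.Iic (f n)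
  have hDle : ∀ f w, w ∈ D f → w ≤ x := by
    rintro f w (rfl | hw)
    · exact le_rfl
    · rcases Set.mem_iUnion.1 hw with ⟨n, m, _, rfl⟩
      exact (hyltx n m).le
  have hDS : ∀ f, D f ⊆ S := by
    rintro f w (rfl | hw)
    · exact hxS
    · rcases Set.mem_iUnion.1 hw with ⟨n, m, _, rfl⟩
      exact hyS n m
  have hxD : ∀ f, x ∈ D f := fun f => Set.mem_union_left _ rfl
  have hyD : ∀ f n, y n (f n) ∈ D f := fun f n =>
    Set.mem_union_right _ (Set.mem_iUnion.2 ⟨n, f n, Set.mem_Iic.2 le_rfl, rfl⟩)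
  have hDclosed : ∀ f, IsClosed (D f) := by
    intro f
    rw [← isOpen_compl_iff, isOpen_iff_forall_mem_open]
    intro z hz
    rcases lt_trichotomy z x with hlt | rfl | hgt
    · obtain ⟨N, hN⟩ := hxs3 z hlt
      have hAfin : (D f ∩ Set.Iio (xs N)).Finite := by
        have hsub : D f ∩ Set.Iio (xs N) ⊆ ⋃ k ∈ Set.Iic N, (y k) '' Set.Iic (f k) := by
          rintro w ⟨hw1, hw2⟩
          rcases hw1 with rfl | hw1
          · exact absurd hw2 (not_lt.2 (hxslt N).le)
          rcases Set.mem_iUnion.1 hw1 with ⟨k, m, hm, rfl⟩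
          by_cases hkN : k ≤ N
          · exact Set.mem_biUnion hkN ⟨m, hm, rfl⟩
          · exfalso
            push_neg at hkN
            obtain ⟨k', rfl⟩ : ∃ k', k = k' + 1 := ⟨k - 1, (Nat.succ_pred_eq_of_pos
              (Nat.lt_of_le_of_lt (Nat.zero_le N) hkN)).symm⟩
            have h1 : xs N ≤ xs k' := hxs1.monotone (Nat.lt_succ_iff.1 hkN)
            have h2 : xs k' < y (k' + 1) m := hygt k' m
            exact absurd hw2 (not_lt.2 (h1.trans h2.le))
        exact ((Set.finite_Iic N).biUnion fun k _ => (Set.finite_Iic (f k)).image _).subset hsub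
      refine ⟨Set.Iio (xs N) \ (D f ∩ Set.Iio (xs N)), ?_, isOpen_Iio.sdiff hAfin.isClosed, ?_⟩
      · rintro w ⟨hw1, hw2⟩ hwD
        exact hw2 ⟨hwD, hw1⟩
      · exact ⟨hN, fun hmem => hz hmem.1⟩
    · exact absurd (hxD f) hz
    · refine ⟨Set.Ioi x, ?_, isOpen_Ioi, hgt⟩
      intro w hw hwD
      exact absurd (hDle f w hwD) (not_le.2 hw)
  have hDcpt : ∀ f, IsCompact (D f) :=
    fun f => isCompact_of_closed_bdd (hDclosed f) ⟨x, hDle f⟩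
  -- the bounding map on compact subsets of S
  have hbound : ∀ c : KS S, ∀ n, ∃ m0 : ℕ, ∀ m, y n m ∈ c.1 → m < m0 := by
    intro c n
    have hcl : IsClosed c.1 := c.2.2.isClosed
    have hnK : xs n ∉ c.1 := fun h => (hxsF n).2 (c.2.1 h)
    obtain ⟨l, hl, hdisj⟩ := exists_Ioc_disjoint hcl hnK (hxsbot n)
    obtain ⟨m0, hm0⟩ := hy3 n l hl
    refine ⟨m0, fun m hm => ?_⟩
    have hle : y n m ≤ l := by
      by_contra h
      push_neg at h
      rw [Set.eq_empty_iff_forall_notMem] at hdisj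
      exact hdisj (y n m) ⟨⟨h, (hylt n m).le⟩, hm⟩
    exact (hy1 n).lt_iff_lt.1 (lt_of_le_of_lt hle hm0)
  choose g hg using hbound
  -- `g '' C` is dominating
  have hdom : ∀ f : ℕ → ℕ, ∃ g' ∈ g '' C, f ≤ g' := by
    intro f
    obtain ⟨c, hcC, hle⟩ := hC ⟨D f, hDS f, hDcpt f⟩ (Set.mem_univ _)
    refine ⟨g c, Set.mem_image_of_mem _ hcC, fun n => ?_⟩
    have : y n (f n) ∈ c.1 := hle (hyD f n)
    exact (hg c n (f n) this).le
  exact (frakD_le hdom).trans Cardinal.mk_image_le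

lemma KS_le {S : Set O1} {p q : KS S} : p ≤ q ↔ p.1 ⊆ q.1 := Iff.rfl

/-- For `S ⊆ ω₁`: (1) if `S` is compact then `cof(K(S)) = 1`; (2) if `S` is bounded, not
compact, and `cl(S) \ S` is closed in `ω₁`, then `cof(K(S)) = ω`; (3) if `S` is unbounded
and `cl(S) \ S` is closed in `ω₁`, then `cof(K(S)) = ω₁`; (4) if `cl(S) \ S` is not closed
in `ω₁`, then `cof(K(S)) = 𝔡`. -/
theorem statement12 (S : Set O1) :
    (IsCompact S → cofOf (KS S) = 1) ∧
      (BddO1 S → ¬ IsCompact S → IsClosed (closure S \ S) → cofOf (KS S) = ℵ₀) ∧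
      (¬ BddO1 S → IsClosed (closure S \ S) → cofOf (KS S) = Cardinal.aleph 1) ∧
      (¬ IsClosed (closure S \ S) → cofOf (KS S) = frakD) := by
  refine ⟨?_, ?_, ?_, ?_⟩
  · -- Case 1: S compact
    intro hS
    apply le_antisymm
    · have hcof : IsCofinalFor' Set.univ ({⟨S, subset_rfl, hS⟩} : Set (KS S)) :=
        fun p _ => ⟨⟨S, subset_rfl, hS⟩, Set.mem_singleton _, KS_le.2 p.2.1⟩
      exact (cofOf_le hcof).trans_eq (Cardinal.mk_singleton _)
    · obtain ⟨C, hCcof, hCcard⟩ := cofOf_spec (KS S)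
      rw [← hCcard, Cardinal.one_le_iff_ne_zero, Cardinal.mk_ne_zero_iff]
      obtain ⟨c, hc, _⟩ := hCcof ⟨∅, Set.empty_subset S, isCompact_empty⟩ (Set.mem_univ _)
      exact ⟨⟨c, hc⟩⟩
  · -- Case 2: bounded, not compact, diff closed
    intro hbd hnc hFcl
    obtain ⟨𝒞, h𝒞c, h𝒞p, h𝒞cof⟩ := countable_cofinal_of_closed_diff hbd hFcl
    apply le_antisymm
    · have hcof : IsCofinalFor' Set.univ {c : KS S | c.1 ∈ 𝒞} := by
        intro p _
        obtain ⟨L, hL, hKL⟩ := h𝒞cof p.1 p.2.1 p.2.2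
        exact ⟨⟨L, (h𝒞p L hL).1, (h𝒞p L hL).2⟩, hL, KS_le.2 hKL⟩
      refine (cofOf_le hcof).trans ?_
      have hinj : Function.Injective
          (fun c : ↥{c : KS S | c.1 ∈ 𝒞} => (⟨c.1.1, c.2⟩ : ↥𝒞)) := by
        rintro ⟨c1, m1⟩ ⟨c2, m2⟩ h
        simp only [Subtype.mk.injEq] at h
        exact Subtype.ext (Subtype.ext h)
      exact (Cardinal.mk_le_of_injective hinj).trans
        (Cardinal.mk_le_aleph0_iff.2 h𝒞c.to_subtype)
    · obtain ⟨C0, hC0cof, hC0card⟩ := cofOf_spec (KS S)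
      rw [← hC0card]
      by_contra hlt
      push_neg at hlt
      have hfin : C0.Finite := by
        rw [← Set.not_infinite]
        intro hinf
        exact absurd (Cardinal.infinite_iff.1 hinf.to_subtype) (not_le.2 hlt)
      have hU : IsCompact (⋃ c ∈ C0, (c : KS S).1) :=
        hfin.isCompact_biUnion fun c _ => c.2.2
      have hSU : S = ⋃ c ∈ C0, (c : KS S).1 := by
        apply Set.Subset.antisymm
        · intro z hz
          obtain ⟨c, hc, hle⟩ := hC0cof
            ⟨{z}, Set.singleton_subset_iff.2 hz, isCompact_singleton⟩ (Set.mem_univ _)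
          exact Set.mem_biUnion hc (KS_le.1 hle rfl)
        · exact Set.iUnion₂_subset fun c _ => c.2.1
      exact hnc (hSU ▸ hU)
  · -- Case 3: unbounded, diff closed
    intro hub hFcl
    have h𝒞 : ∀ β : O1, ∃ 𝒞 : Set (Set O1), 𝒞.Countable ∧
        (∀ L ∈ 𝒞, L ⊆ S ∩ Set.Iic β ∧ IsCompact L) ∧
        ∀ K, K ⊆ S ∩ Set.Iic β → IsCompact K → ∃ L ∈ 𝒞, K ⊆ L :=
      fun β => countable_cofinal_of_closed_diff ⟨β, fun x hx => hx.2⟩ (trunc_diff_closed hFcl β)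
    choose 𝒞 h1 h2 h3 using h𝒞
    apply le_antisymm
    · have hcof : IsCofinalFor' Set.univ {c : KS S | c.1 ∈ ⋃ β, 𝒞 β} := by
        intro p _
        obtain ⟨β, hβ⟩ := p.2.2.bddO1'
        have hsub : p.1 ⊆ S ∩ Set.Iic β := fun z hz => ⟨p.2.1 hz, hβ z hz⟩
        obtain ⟨L, hL, hKL⟩ := h3 β p.1 hsub p.2.2
        refine ⟨⟨L, ((h2 β L hL).1).trans Set.inter_subset_left, (h2 β L hL).2⟩,
          Set.mem_iUnion.2 ⟨β, hL⟩, KS_le.2 hKL⟩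
      refine (cofOf_le hcof).trans ?_
      have hinj : Function.Injective
          (fun c : ↥{c : KS S | c.1 ∈ ⋃ β, 𝒞 β} => (⟨c.1.1, c.2⟩ : ↥(⋃ β, 𝒞 β))) := by
        rintro ⟨c1, m1⟩ ⟨c2, m2⟩ h
        simp only [Subtype.mk.injEq] at h
        exact Subtype.ext (Subtype.ext h)
      refine (Cardinal.mk_le_of_injective hinj).trans ?_
      refine (Cardinal.mk_iUnion_le _).trans ?_
      have hsup : ⨆ β, #↥(𝒞 β) ≤ ℵ₀ := ciSup_le' fun β => Cardinal.mk_le_aleph0_iff.2 (h1 β).to_subtype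
      calc #O1 * ⨆ β, #↥(𝒞 β) ≤ Cardinal.aleph 1 * ℵ₀ :=
            mul_le_mul' (le_of_eq mk_O1) hsup
        _ = Cardinal.aleph 1 := by
            rw [Cardinal.mul_eq_max (Cardinal.aleph0_le_aleph 1) le_rfl]
            exact max_eq_left (Cardinal.aleph0_le_aleph 1)
    · obtain ⟨C0, hC0cof, hC0card⟩ := cofOf_spec (KS S)
      rw [← hC0card]
      by_contra hlt
      push_neg at hlt
      have hC0c : C0.Countable := by
        rw [← Cardinal.le_aleph0_iff_set_countable]
        have := hlt.trans_le (le_of_eq (Cardinal.succ_aleph0).symm)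
        exact Order.lt_succ_iff.1 (by rwa [Cardinal.succ_aleph0])
      have hA : (⋃ c ∈ C0, (c : KS S).1).Countable :=
        hC0c.biUnion fun c _ => bdd_countable c.2.2.bddO1'
      obtain ⟨γ, hγ⟩ := countable_bdd hA
      have : ∃ z ∈ S, ¬ z ≤ γ := by
        by_contra h
        push_neg at h
        exact hub ⟨γ, h⟩
      obtain ⟨z, hzS, hzγ⟩ := this
      obtain ⟨c, hc, hle⟩ := hC0cof
        ⟨{z}, Set.singleton_subset_iff.2 hzS, isCompact_singleton⟩ (Set.mem_univ _)
      exact hzγ (hγ z (Set.mem_biUnion hc (KS_le.1 hle rfl)))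
  · -- Case 4: diff not closed
    intro hFncl
    apply le_antisymm
    · obtain ⟨Dd, hDdom, hDcard⟩ := frakD_spec
      have hΦ : ∀ β : O1, ∃ Φ : (ℕ → ℕ) → Set O1, Monotone Φ ∧
          (∀ f, Φ f ⊆ S ∩ Set.Iic β ∧ IsCompact (Φ f)) ∧
          ∀ K, K ⊆ S ∩ Set.Iic β → IsCompact K → ∃ f, K ⊆ Φ f :=
        fun β => dfamily_cofinal_bounded ⟨β, fun x hx => hx.2⟩
      choose Φ hmono hprop hcof using hΦ
      let h : O1 × ↥Dd → KS S := fun p =>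
        ⟨Φ p.1 p.2.1, ((hprop p.1 p.2.1).1).trans Set.inter_subset_left, (hprop p.1 p.2.1).2⟩
      have hcofr : IsCofinalFor' Set.univ (Set.range h) := by
        intro p _
        obtain ⟨β, hβ⟩ := p.2.2.bddO1'
        have hsub : p.1 ⊆ S ∩ Set.Iic β := fun z hz => ⟨p.2.1 hz, hβ z hz⟩
        obtain ⟨f, hf⟩ := hcof β p.1 hsub p.2.2
        obtain ⟨g0, hg0D, hfg⟩ := hDdom f
        exact ⟨h (β, ⟨g0, hg0D⟩), Set.mem_range_self _, KS_le.2 (hf.trans (hmono β hfg))⟩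
      refine (cofOf_le hcofr).trans ?_
      refine Cardinal.mk_range_le.trans ?_
      have hDinf : ℵ₀ ≤ #↥Dd := by rw [hDcard]; exact aleph0_lt_frakD.le
      calc #(O1 × ↥Dd) = #O1 * #↥Dd := by rw [Cardinal.mk_prod, Cardinal.lift_id, Cardinal.lift_id]
        _ = Cardinal.aleph 1 * frakD := by rw [mk_O1, hDcard]
        _ = frakD := by
            rw [Cardinal.mul_eq_max (Cardinal.aleph0_le_aleph 1) aleph0_lt_frakD.le]
            exact max_eq_right (le_of_le_of_eq aleph_one_le_frakD rfl)
        _ ≤ frakD := le_rfl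
    · obtain ⟨C0, hC0cof, hC0card⟩ := cofOf_spec (KS S)
      rw [← hC0card]
      exact frakD_le_cofinal hFncl hC0cof
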